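/- Let T1 : 𝕋 → Matrix q₁ p₁ ℂ and T2 : 𝕋 → Matrix q₁ p₂ ℂ be continuous. Suppose: U_i : 𝕋 → Matrix q₁ p₂ ℂ is continuous, inner, and in H∞; U_o : 𝕋 → Matrix p₂ p₂ ℂ is continuous, belongs to H∞, is pointwise invertible with z ↦ U_o(z)⁻¹ in H∞, and T2(z) = U_i(z)U_o(z) for all z ∈ 𝕋. Define Y := (I − U_iU_i^∼)T1. Suppose for every real γ > ‖Y‖∞ we are given a continuous Y_{o,γ} : 𝕋 → Matrix p₁ p₁ ℂ, pointwise invertible, with Y_{o,γ} ∈ H∞, (Y_{o,γ})⁻¹ ∈ H∞, and Y_{o,γ}(z)ᴴY_{o,γ}(z) = γ²·I − Y(z)ᴴY(z) for all z ∈ 𝕋; define R_γ := U_i^∼·T1·Y_{o,γ}⁻¹. Then inf{‖T1 − T2·Q‖∞ : Q : 𝕋 → Matrix p₂ p₁ ℂ continuous, Q ∈ H∞} = inf{γ : γ > ‖Y‖∞ and dist(R_γ, H∞) < 1}. -/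

import Mathlib

set_option linter.unusedSectionVars false
set_option linter.unusedVariables false
set_option maxHeartbeats 1600000


open Matrix

/-- The spectral norm (ℓ²→ℓ² operator norm, largest singular value) of a complex matrix. -/
noncomputable def specNorm {m n : Type*} [Fintype m] [Fintype n] [DecidableEq n]
    (M : Matrix m n ℂ) : ℝ :=
  ‖LinearMap.toContinuousLinearMap (Matrix.toEuclideanLin M)‖

/-- The `H∞` norm of a matrix-valued function on the unit circle:
`‖F‖∞ = sup_{z ∈ 𝕋} ‖F(z)‖`. -/
noncomputable def hinfNorm {m n : Type*} [Fintype m] [Fintype n] [DecidableEq n]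
    (F : Circle → Matrix m n ℂ) : ℝ :=
  ⨆ z : Circle, specNorm (F z)

/-- A matrix-valued function `F` on the unit circle belongs to `H∞` if there is a
matrix-valued function `G`, continuous on the closed unit disc and analytic on the open
unit disc, with `F(z) = G(z⁻¹)` for all `z` on the circle. -/
def MemHInf {m n : Type*} (F : Circle → Matrix m n ℂ) : Prop :=
  ∃ G : ℂ → Matrix m n ℂ,
    (∀ i j, ContinuousOn (fun w => G w i j) (Metric.closedBall (0 : ℂ) 1)) ∧
    (∀ i j, AnalyticOn ℂ (fun w => G w i j) (Metric.ball (0 : ℂ) 1)) ∧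
    (∀ z : Circle, F z = G ((z : ℂ)⁻¹))

/-- The distance from `R` to `H∞` in the `‖·‖∞` norm:
`dist(R, H∞) = inf { ‖R − X‖∞ : X continuous, X ∈ H∞ }`. -/
noncomputable def distHInf {m n : Type*} [Fintype m] [Fintype n] [DecidableEq n]
    (R : Circle → Matrix m n ℂ) : ℝ :=
  sInf {c : ℝ | ∃ X : Circle → Matrix m n ℂ,
    Continuous X ∧ MemHInf X ∧ c = hinfNorm fun z => R z - X z}



variable {l m n p : Type*} [Fintype l] [Fintype m] [Fintype n] [Fintype p]
  [DecidableEq l] [DecidableEq m] [DecidableEq n] [DecidableEq p]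

lemma le_of_sq {a b : ℝ} (hb : 0 ≤ b) (h : a ^ 2 ≤ b ^ 2) (ha : 0 ≤ a) : a ≤ b := by nlinarith

lemma norm_apply_le (M : Matrix m n ℂ) (v : EuclideanSpace ℂ n) :
    ‖Matrix.toEuclideanLin M v‖ ≤ specNorm M * ‖v‖ := by
  simpa [specNorm] using (LinearMap.toContinuousLinearMap (Matrix.toEuclideanLin M)).le_opNorm v

lemma specNorm_le_bound (M : Matrix m n ℂ) {a : ℝ} (ha : 0 ≤ a)
    (h : ∀ v : EuclideanSpace ℂ n, ‖Matrix.toEuclideanLin M v‖ ≤ a * ‖v‖) :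
    specNorm M ≤ a :=
  ContinuousLinearMap.opNorm_le_bound _ ha (by simpa using h)

lemma toEuclideanLin_mul_apply (A : Matrix m n ℂ) (B : Matrix n p ℂ) (v : EuclideanSpace ℂ p) :
    Matrix.toEuclideanLin (A * B) v = Matrix.toEuclideanLin A (Matrix.toEuclideanLin B v) := by
  simp [Matrix.toEuclideanLin_apply, Matrix.mulVec_mulVec]

lemma toEuclideanLin_one_apply (v : EuclideanSpace ℂ n) :
    Matrix.toEuclideanLin (1 : Matrix n n ℂ) v = v := by
  simp [Matrix.toEuclideanLin_apply, Matrix.one_mulVec]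

lemma inner_self_complex (x : EuclideanSpace ℂ n) :
    (inner ℂ x x : ℂ) = ((‖x‖ ^ 2 : ℝ) : ℂ) := by
  rw [inner_self_eq_norm_sq_to_K]; norm_cast

lemma inner_ct_mul_self (A : Matrix m n ℂ) (v : EuclideanSpace ℂ n) :
    (inner ℂ v (Matrix.toEuclideanLin (Aᴴ * A) v) : ℂ) = (‖Matrix.toEuclideanLin A v‖ : ℂ) ^ 2 := by
  rw [toEuclideanLin_mul_apply, Matrix.toEuclideanLin_conjTranspose_eq_adjoint,
    LinearMap.adjoint_inner_right, inner_self_eq_norm_sq_to_K]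
  norm_cast

lemma normsq_split {A : Matrix m n ℂ} {M : Matrix p n ℂ} {Y : Matrix l n ℂ}
    (h : Aᴴ * A = Mᴴ * M + Yᴴ * Y) (v : EuclideanSpace ℂ n) :
    ‖Matrix.toEuclideanLin A v‖ ^ 2
      = ‖Matrix.toEuclideanLin M v‖ ^ 2 + ‖Matrix.toEuclideanLin Y v‖ ^ 2 := by
  have h2 : (inner ℂ v (Matrix.toEuclideanLin (Aᴴ * A) v) : ℂ)
      = inner ℂ v (Matrix.toEuclideanLin (Mᴴ * M) v)
        + inner ℂ v (Matrix.toEuclideanLin (Yᴴ * Y) v) := by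
    rw [h, map_add, LinearMap.add_apply, inner_add_right]
  rw [inner_ct_mul_self, inner_ct_mul_self, inner_ct_mul_self] at h2
  have h4 : ((‖Matrix.toEuclideanLin A v‖ ^ 2 : ℝ) : ℂ)
      = ((‖Matrix.toEuclideanLin M v‖ ^ 2 + ‖Matrix.toEuclideanLin Y v‖ ^ 2 : ℝ) : ℂ) := by
    exact_mod_cast h2
  exact Complex.ofReal_inj.mp h4

lemma normsq_Yo {Yo : Matrix n n ℂ} {Y : Matrix m n ℂ} {γ : ℝ}
    (h : Yoᴴ * Yo = ((γ : ℂ) ^ 2) • (1 : Matrix n n ℂ) - Yᴴ * Y) (v : EuclideanSpace ℂ n) :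
    ‖Matrix.toEuclideanLin Yo v‖ ^ 2
      = γ ^ 2 * ‖v‖ ^ 2 - ‖Matrix.toEuclideanLin Y v‖ ^ 2 := by
  have h1 := inner_ct_mul_self Yo v
  rw [h] at h1
  have h2 : Matrix.toEuclideanLin (((γ : ℂ) ^ 2) • (1 : Matrix n n ℂ) - Yᴴ * Y) v
      = ((γ : ℂ) ^ 2) • v - Matrix.toEuclideanLin (Yᴴ * Y) v := by
    rw [map_sub, _root_.map_smul, LinearMap.sub_apply, LinearMap.smul_apply,
      toEuclideanLin_one_apply]
  rw [h2, inner_sub_right, inner_smul_right, inner_self_complex,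
    inner_ct_mul_self] at h1
  have h4 : ((γ ^ 2 * ‖v‖ ^ 2 - ‖Matrix.toEuclideanLin Y v‖ ^ 2 : ℝ) : ℂ)
      = ((‖Matrix.toEuclideanLin Yo v‖ ^ 2 : ℝ) : ℂ) := by exact_mod_cast h1
  exact (Complex.ofReal_inj.mp h4).symm

lemma norm_Ui_apply {Ui : Matrix m p ℂ} (hUi : Uiᴴ * Ui = 1) (x : EuclideanSpace ℂ p) :
    ‖Matrix.toEuclideanLin Ui x‖ = ‖x‖ := by
  have h := inner_ct_mul_self Ui x
  rw [hUi] at h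
  rw [toEuclideanLin_one_apply, inner_self_complex] at h
  have h4 : ((‖x‖ ^ 2 : ℝ) : ℂ) = ((‖Matrix.toEuclideanLin Ui x‖ ^ 2 : ℝ) : ℂ) := by
    exact_mod_cast h
  have h2 := Complex.ofReal_inj.mp h4
  have := congrArg Real.sqrt h2
  simpa [Real.sqrt_sq, norm_nonneg] using this.symm

lemma norm_ct_apply_le {Ui : Matrix m p ℂ} (hUi : Uiᴴ * Ui = 1) (u : EuclideanSpace ℂ m) :
    ‖Matrix.toEuclideanLin Uiᴴ u‖ ≤ ‖u‖ := by
  set w := Matrix.toEuclideanLin Uiᴴ u with hw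
  have hiso : ‖Matrix.toEuclideanLin Ui w‖ = ‖w‖ := norm_Ui_apply hUi w
  have h1 : ((‖w‖ ^ 2 : ℝ) : ℂ) = inner ℂ u (Matrix.toEuclideanLin Ui w) := by
    rw [← inner_self_complex]
    nth_rewrite 1 [hw]
    rw [Matrix.toEuclideanLin_conjTranspose_eq_adjoint, LinearMap.adjoint_inner_left]
  have h2 : ‖w‖ ^ 2 ≤ ‖u‖ * ‖w‖ := by
    calc ‖w‖ ^ 2 = ‖((‖w‖ ^ 2 : ℝ) : ℂ)‖ := by
          rw [Complex.norm_real, Real.norm_eq_abs, abs_of_nonneg (sq_nonneg _)]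
    _ = ‖(inner ℂ u (Matrix.toEuclideanLin Ui w) : ℂ)‖ := by rw [h1]
    _ ≤ ‖u‖ * ‖Matrix.toEuclideanLin Ui w‖ := norm_inner_le_norm _ _
    _ = ‖u‖ * ‖w‖ := by rw [hiso]
  nlinarith [norm_nonneg w, norm_nonneg u]

lemma specNorm_continuous : Continuous (specNorm : Matrix m n ℂ → ℝ) := by
  have : Continuous fun M : Matrix m n ℂ =>
      (Matrix.toEuclideanLin.trans LinearMap.toContinuousLinearMap).toLinearMap M :=
    LinearMap.continuous_of_finiteDimensional _
  exact continuous_norm.comp this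

lemma specNorm_le_hinfNorm {F : Circle → Matrix m n ℂ} (hF : Continuous F) (z : Circle) :
    specNorm (F z) ≤ hinfNorm F :=
  le_ciSup ((isCompact_range (specNorm_continuous.comp hF)).bddAbove) z

lemma hinfNorm_le {F : Circle → Matrix m n ℂ} {a : ℝ} (h : ∀ z, specNorm (F z) ≤ a) :
    hinfNorm F ≤ a :=
  ciSup_le h

lemma hinfNorm_nonneg (F : Circle → Matrix m n ℂ) : 0 ≤ hinfNorm F :=
  Real.iSup_nonneg fun _ => norm_nonneg _

lemma memHInf_zero : MemHInf (fun _ : Circle => (0 : Matrix m n ℂ)) :=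
  ⟨fun _ => 0, fun i j => by simpa using continuousOn_const,
   fun i j => by simpa using analyticOn_const, fun _ => rfl⟩

lemma MemHInf.mul {F1 : Circle → Matrix m n ℂ} {F2 : Circle → Matrix n p ℂ}
    (h1 : MemHInf F1) (h2 : MemHInf F2) : MemHInf (fun z => F1 z * F2 z) := by
  obtain ⟨G1, hc1, ha1, he1⟩ := h1
  obtain ⟨G2, hc2, ha2, he2⟩ := h2
  refine ⟨fun w => G1 w * G2 w, fun i j => ?_, fun i j => ?_,
    fun z => by show F1 z * F2 z = _; rw [he1 z, he2 z]⟩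
  · simp only [Matrix.mul_apply]
    exact continuousOn_finset_sum _ fun k _ => (hc1 i k).mul (hc2 k j)
  · simp only [Matrix.mul_apply]
    exact Finset.analyticOn_fun_sum _ fun k _ => (ha1 i k).mul (ha2 k j)

lemma continuous_matrix_inv {F : Circle → Matrix n n ℂ} (hF : Continuous F)
    (h : ∀ z, IsUnit (F z)) : Continuous fun z => (F z)⁻¹ := by
  have hdet : ∀ z, (F z).det ≠ 0 := fun z =>
    ((Matrix.isUnit_iff_isUnit_det _).mp (h z)).ne_zero
  simp only [Matrix.inv_def, Ring.inverse_eq_inv']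
  exact ((hF.matrix_det).inv₀ hdet).smul hF.matrix_adjugate

lemma key_identity (T1 : Matrix m n ℂ) (Ui : Matrix m p ℂ) (Uo : Matrix p p ℂ)
    (Q : Matrix p n ℂ) (hUi : Uiᴴ * Ui = 1) :
    (T1 - Ui * Uo * Q)ᴴ * (T1 - Ui * Uo * Q)
      = (Uiᴴ * T1 - Uo * Q)ᴴ * (Uiᴴ * T1 - Uo * Q)
        + ((1 - Ui * Uiᴴ) * T1)ᴴ * ((1 - Ui * Uiᴴ) * T1) := by
  have hcol1 : Uiᴴ * (Ui * (Uo * Q)) = Uo * Q := by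
    rw [← Matrix.mul_assoc, hUi, Matrix.one_mul]
  have hcol2 : Uiᴴ * (Ui * (Uiᴴ * T1)) = Uiᴴ * T1 := by
    rw [← Matrix.mul_assoc, hUi, Matrix.one_mul]
  simp only [conjTranspose_sub, conjTranspose_mul, conjTranspose_one, conjTranspose_conjTranspose,
    Matrix.sub_mul, Matrix.mul_sub, Matrix.mul_one, Matrix.one_mul, Matrix.mul_assoc]
  rw [hcol1, hcol2]
  abel


/-- "1984" H∞ control, `T3 = I` case (Theorem 1, part 1):
`inf { ‖T1 − T2 Q‖∞ : Q ∈ H∞ } = inf { γ : γ > ‖Y‖∞ and dist(R_γ, H∞) < 1 }`. -/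
theorem hinf_1984_identity_optimal (q1 p1 p2 : ℕ)
    (T1 : Circle → Matrix (Fin q1) (Fin p1) ℂ) (hT1 : Continuous T1)
    (T2 : Circle → Matrix (Fin q1) (Fin p2) ℂ) (hT2 : Continuous T2)
    (Ui : Circle → Matrix (Fin q1) (Fin p2) ℂ) (hUic : Continuous Ui)
    (hUiInner : ∀ z, (Ui z)ᴴ * Ui z = 1) (hUiH : MemHInf Ui)
    (Uo : Circle → Matrix (Fin p2) (Fin p2) ℂ) (hUoc : Continuous Uo)
    (hUoH : MemHInf Uo) (hUoUnit : ∀ z, IsUnit (Uo z))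
    (hUoInvH : MemHInf fun z => (Uo z)⁻¹)
    (hT2fact : ∀ z, T2 z = Ui z * Uo z)
    (Y : Circle → Matrix (Fin q1) (Fin p1) ℂ)
    (hY : Y = fun z => (1 - Ui z * (Ui z)ᴴ) * T1 z)
    (Yo : ℝ → Circle → Matrix (Fin p1) (Fin p1) ℂ)
    (hYoc : ∀ γ, hinfNorm Y < γ → Continuous (Yo γ))
    (hYoUnit : ∀ γ, hinfNorm Y < γ → ∀ z, IsUnit (Yo γ z))
    (hYoH : ∀ γ, hinfNorm Y < γ → MemHInf (Yo γ))
    (hYoInvH : ∀ γ, hinfNorm Y < γ → MemHInf fun z => (Yo γ z)⁻¹)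
    (hYofact : ∀ γ, hinfNorm Y < γ → ∀ z, (Yo γ z)ᴴ * Yo γ z
      = ((γ : ℂ) ^ 2) • (1 : Matrix (Fin p1) (Fin p1) ℂ) - (Y z)ᴴ * Y z)
    (R : ℝ → Circle → Matrix (Fin p2) (Fin p1) ℂ)
    (hR : R = fun γ z => (Ui z)ᴴ * T1 z * (Yo γ z)⁻¹) :
    sInf {c : ℝ | ∃ Q : Circle → Matrix (Fin p2) (Fin p1) ℂ,
        Continuous Q ∧ MemHInf Q ∧ c = hinfNorm fun z => T1 z - T2 z * Q z}
      = sInf {γ : ℝ | hinfNorm Y < γ ∧ distHInf (R γ) < 1} := by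
  classical
  have hYz : ∀ z, Y z = (1 - Ui z * (Ui z)ᴴ) * T1 z := fun z => by rw [hY]
  have hRz : ∀ γ z, R γ z = (Ui z)ᴴ * T1 z * (Yo γ z)⁻¹ := fun γ z => by rw [hR]
  have hYcont : Continuous Y := by
    rw [hY]
    exact (continuous_const.sub (hUic.matrix_mul hUic.matrix_conjTranspose)).matrix_mul hT1
  have hUoDet : ∀ z, IsUnit (Uo z).det := fun z => (Matrix.isUnit_iff_isUnit_det _).mp (hUoUnit z)
  have hUoInvc : Continuous fun z => (Uo z)⁻¹ := continuous_matrix_inv hUoc hUoUnit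
  set S1 := {c : ℝ | ∃ Q : Circle → Matrix (Fin p2) (Fin p1) ℂ,
      Continuous Q ∧ MemHInf Q ∧ c = hinfNorm fun z => T1 z - T2 z * Q z} with hS1
  set S2 := {γ : ℝ | hinfNorm Y < γ ∧ distHInf (R γ) < 1} with hS2
  have hLSne : S1.Nonempty := ⟨_, ⟨fun _ => 0, continuous_const, memHInf_zero, rfl⟩⟩
  have hLSbdd : BddBelow S1 := ⟨0, fun c hc => by
    obtain ⟨Q, -, -, rfl⟩ := hc; exact hinfNorm_nonneg _⟩
  have hS2bdd : BddBelow S2 := ⟨0, fun γ hγ =>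
    le_of_lt (lt_of_le_of_lt (hinfNorm_nonneg Y) hγ.1)⟩
  -- the master pointwise identity
  have hmain : ∀ (Q : Circle → Matrix (Fin p2) (Fin p1) ℂ) (z : Circle)
      (v : EuclideanSpace ℂ (Fin p1)),
      ‖Matrix.toEuclideanLin (T1 z - T2 z * Q z) v‖ ^ 2
        = ‖Matrix.toEuclideanLin ((Ui z)ᴴ * T1 z - Uo z * Q z) v‖ ^ 2
          + ‖Matrix.toEuclideanLin (Y z) v‖ ^ 2 := by
    intro Q z v
    apply normsq_split
    rw [hT2fact z, hYz z]
    exact key_identity (T1 z) (Ui z) (Uo z) (Q z) (hUiInner z)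
  -- Direction A : each γ ∈ S2 dominates sInf S1
  have dirA : ∀ γ ∈ S2, sInf S1 ≤ γ := by
    intro γ hγ
    obtain ⟨hγY, hdist⟩ := hγ
    have hγ0 : (0:ℝ) ≤ γ := le_of_lt (lt_of_le_of_lt (hinfNorm_nonneg Y) hγY)
    have hYoc' := hYoc γ hγY
    have hYoDet : ∀ z, IsUnit (Yo γ z).det := fun z =>
      (Matrix.isUnit_iff_isUnit_det _).mp (hYoUnit γ hγY z)
    have hYoInvc : Continuous fun z => (Yo γ z)⁻¹ :=
      continuous_matrix_inv hYoc' (hYoUnit γ hγY)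
    have hRc : Continuous (R γ) := by
      rw [show R γ = fun z => (Ui z)ᴴ * T1 z * (Yo γ z)⁻¹ from funext fun z => hRz γ z]
      exact (hUic.matrix_conjTranspose.matrix_mul hT1).matrix_mul hYoInvc
    obtain ⟨c', hc'mem, hc'lt⟩ := exists_lt_of_csInf_lt
      (⟨_, ⟨fun _ => 0, continuous_const, memHInf_zero, rfl⟩⟩ : Set.Nonempty
        {c : ℝ | ∃ X : Circle → Matrix (Fin p2) (Fin p1) ℂ,
          Continuous X ∧ MemHInf X ∧ c = hinfNorm fun z => R γ z - X z}) hdist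
    obtain ⟨X, hXc, hXH, rfl⟩ := hc'mem
    have hRXc : Continuous fun z => R γ z - X z := hRc.sub hXc
    set Q := fun z => (Uo z)⁻¹ * (X z * Yo γ z) with hQ
    have hQc : Continuous Q := hUoInvc.matrix_mul (hXc.matrix_mul hYoc')
    have hQH : MemHInf Q := hUoInvH.mul (hXH.mul (hYoH γ hγY))
    have hM : ∀ z, (Ui z)ᴴ * T1 z - Uo z * Q z = (R γ z - X z) * Yo γ z := by
      intro z
      have hUoQ : Uo z * Q z = X z * Yo γ z := by
        simp only [hQ]
        rw [← Matrix.mul_assoc, Matrix.mul_nonsing_inv _ (hUoDet z), Matrix.one_mul]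
      rw [hUoQ, hRz γ z, Matrix.sub_mul, Matrix.mul_assoc ((Ui z)ᴴ * T1 z),
        Matrix.nonsing_inv_mul _ (hYoDet z), Matrix.mul_one]
    have hb : ∀ z, specNorm (T1 z - T2 z * Q z) ≤ γ := by
      intro z
      apply specNorm_le_bound _ hγ0
      intro v
      have e1 := hmain Q z v
      rw [hM z] at e1
      have e2 : ‖Matrix.toEuclideanLin ((R γ z - X z) * Yo γ z) v‖
          ≤ ‖Matrix.toEuclideanLin (Yo γ z) v‖ := by
        rw [toEuclideanLin_mul_apply]
        calc ‖Matrix.toEuclideanLin (R γ z - X z) (Matrix.toEuclideanLin (Yo γ z) v)‖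
            ≤ specNorm (R γ z - X z) * ‖Matrix.toEuclideanLin (Yo γ z) v‖ :=
              norm_apply_le _ _
        _ ≤ 1 * ‖Matrix.toEuclideanLin (Yo γ z) v‖ := by
              apply mul_le_mul_of_nonneg_right _ (norm_nonneg _)
              exact le_of_lt (lt_of_le_of_lt (specNorm_le_hinfNorm hRXc z) hc'lt)
        _ = ‖Matrix.toEuclideanLin (Yo γ z) v‖ := one_mul _
      have e3 := normsq_Yo (hYofact γ hγY z) v
      have e2sq := pow_le_pow_left₀ (norm_nonneg _) e2 2
      have e4 : ‖Matrix.toEuclideanLin (T1 z - T2 z * Q z) v‖ ^ 2 ≤ (γ * ‖v‖) ^ 2 := by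
        nlinarith [e1, e3, e2sq, sq_nonneg ‖Matrix.toEuclideanLin (Y z) v‖]
      exact le_of_sq (mul_nonneg hγ0 (norm_nonneg v)) e4 (norm_nonneg _)
    calc sInf S1 ≤ hinfNorm fun z => T1 z - T2 z * Q z :=
          csInf_le hLSbdd ⟨Q, hQc, hQH, rfl⟩
    _ ≤ γ := hinfNorm_le hb
  -- Direction B : for c ∈ S1 and ε > 0, c + ε ∈ S2
  have dirB : ∀ c ∈ S1, ∀ ε : ℝ, 0 < ε → (c + ε) ∈ S2 := by
    intro c hc ε hε
    obtain ⟨Q, hQc, hQH, hceq⟩ := hc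
    have hc0 : 0 ≤ c := hceq ▸ hinfNorm_nonneg _
    have hAc : Continuous fun z => T1 z - T2 z * Q z := hT1.sub (hT2.matrix_mul hQc)
    have hAv : ∀ z v, ‖Matrix.toEuclideanLin (T1 z - T2 z * Q z) v‖ ≤ c * ‖v‖ := by
      intro z v
      refine le_trans (norm_apply_le _ v) (mul_le_mul_of_nonneg_right ?_ (norm_nonneg v))
      rw [hceq]
      exact specNorm_le_hinfNorm hAc z
    have hYle : hinfNorm Y ≤ c := by
      apply hinfNorm_le
      intro z
      apply specNorm_le_bound _ hc0
      intro v
      have e1 := hmain Q z v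
      have h1 := pow_le_pow_left₀ (norm_nonneg _) (hAv z v) 2
      have e4 : ‖Matrix.toEuclideanLin (Y z) v‖ ^ 2 ≤ (c * ‖v‖) ^ 2 := by
        nlinarith [e1, h1, sq_nonneg ‖Matrix.toEuclideanLin ((Ui z)ᴴ * T1 z - Uo z * Q z) v‖]
      exact le_of_sq (mul_nonneg hc0 (norm_nonneg v)) e4 (norm_nonneg _)
    obtain ⟨γ, hγdef⟩ : ∃ γ : ℝ, γ = c + ε := ⟨_, rfl⟩
    have hγY : hinfNorm Y < γ := lt_of_le_of_lt hYle (by rw [hγdef]; linarith)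
    rw [show c + ε = γ from hγdef.symm]
    refine ⟨hγY, ?_⟩
    have hYoc' := hYoc γ hγY
    have hYoDet : ∀ z, IsUnit (Yo γ z).det := fun z =>
      (Matrix.isUnit_iff_isUnit_det _).mp (hYoUnit γ hγY z)
    have hYoInvc : Continuous fun z => (Yo γ z)⁻¹ :=
      continuous_matrix_inv hYoc' (hYoUnit γ hγY)
    obtain ⟨K, hKdef⟩ : ∃ K : ℝ, K = hinfNorm (Yo γ) + 1 := ⟨_, rfl⟩
    have hK0 : 0 < K := by have := hinfNorm_nonneg (Yo γ); rw [hKdef]; linarith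
    have hKz : ∀ z, specNorm (Yo γ z) ≤ K := by
      intro z
      have := specNorm_le_hinfNorm hYoc' z
      rw [hKdef]; linarith
    have hδ : 0 < γ ^ 2 - c ^ 2 := by rw [hγdef]; nlinarith [hc0, hε]
    have hK2 : (K : ℝ) ^ 2 ≠ 0 := (pow_pos hK0 2).ne'
    obtain ⟨r, hrdef⟩ : ∃ r : ℝ, r = Real.sqrt (max 0 (1 - (γ ^ 2 - c ^ 2) / K ^ 2)) := ⟨_, rfl⟩
    have hr0 : 0 ≤ r := hrdef ▸ Real.sqrt_nonneg _
    have hrsq : r ^ 2 = max 0 (1 - (γ ^ 2 - c ^ 2) / K ^ 2) := by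
      rw [hrdef]; exact Real.sq_sqrt (le_max_left _ _)
    have hdivpos : 0 < (γ ^ 2 - c ^ 2) / K ^ 2 := div_pos hδ (pow_pos hK0 2)
    have hr1 : r < 1 := by
      rw [hrdef]
      refine (Real.sqrt_lt' one_pos).mpr ?_
      rw [one_pow]
      exact max_lt one_pos (by linarith)
    set X := fun z => Uo z * Q z * (Yo γ z)⁻¹ with hXdef
    have hXc : Continuous X := (hUoc.matrix_mul hQc).matrix_mul hYoInvc
    have hXH : MemHInf X := (hUoH.mul hQH).mul (hYoInvH γ hγY)
    have hspec : ∀ z, specNorm (R γ z - X z) ≤ r := by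
      intro z
      have hfact : R γ z - X z = ((Ui z)ᴴ * T1 z - Uo z * Q z) * (Yo γ z)⁻¹ := by
        simp only [hXdef]
        rw [hRz γ z, Matrix.sub_mul]
      apply specNorm_le_bound _ hr0
      intro w
      rw [hfact, toEuclideanLin_mul_apply]
      set v := Matrix.toEuclideanLin (Yo γ z)⁻¹ w with hvdef
      have hw : Matrix.toEuclideanLin (Yo γ z) v = w := by
        rw [hvdef, ← toEuclideanLin_mul_apply, Matrix.mul_nonsing_inv _ (hYoDet z),
          toEuclideanLin_one_apply]
      have e1 := hmain Q z v
      have e3 := normsq_Yo (hYofact γ hγY z) v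
      rw [hw] at e3
      have h1 := pow_le_pow_left₀ (norm_nonneg _) (hAv z v) 2
      have h2 : ‖Matrix.toEuclideanLin ((Ui z)ᴴ * T1 z - Uo z * Q z) v‖ ^ 2
          ≤ ‖w‖ ^ 2 - (γ ^ 2 - c ^ 2) * ‖v‖ ^ 2 := by nlinarith [e1, e3, h1]
      have h3 : ‖w‖ ^ 2 ≤ K ^ 2 * ‖v‖ ^ 2 := by
        have hwK : ‖w‖ ≤ K * ‖v‖ := by
          rw [← hw]
          exact le_trans (norm_apply_le _ _)
            (mul_le_mul_of_nonneg_right (hKz z) (norm_nonneg _))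
        nlinarith [norm_nonneg w, norm_nonneg v, hK0.le, hwK]
      have h5 : (γ ^ 2 - c ^ 2) / K ^ 2 * (K ^ 2 * ‖v‖ ^ 2) = (γ ^ 2 - c ^ 2) * ‖v‖ ^ 2 := by
        rw [← mul_assoc, div_mul_cancel₀ _ hK2]
      have h7 := mul_le_mul_of_nonneg_left h3 hdivpos.le
      have h10 : (γ ^ 2 - c ^ 2) / K ^ 2 * ‖w‖ ^ 2 ≤ (γ ^ 2 - c ^ 2) * ‖v‖ ^ 2 := by
        rw [← h5]; exact h7
      have h9 : (1 - (γ ^ 2 - c ^ 2) / K ^ 2) * ‖w‖ ^ 2 ≤ r ^ 2 * ‖w‖ ^ 2 :=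
        mul_le_mul_of_nonneg_right (by rw [hrsq]; exact le_max_right _ _) (sq_nonneg _)
      have h6 : ‖Matrix.toEuclideanLin ((Ui z)ᴴ * T1 z - Uo z * Q z) v‖ ^ 2
          ≤ (r * ‖w‖) ^ 2 := by nlinarith [h2, h10, h9]
      exact le_of_sq (mul_nonneg hr0 (norm_nonneg w)) h6 (norm_nonneg _)
    have hdle : distHInf (R γ) ≤ r := by
      refine le_trans (csInf_le ⟨0, fun d hd => ?_⟩ ⟨X, hXc, hXH, rfl⟩) (hinfNorm_le hspec)
      obtain ⟨X', -, -, rfl⟩ := hd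
      exact hinfNorm_nonneg _
    exact lt_of_le_of_lt hdle hr1
  -- S2 is nonempty
  have hS2ne : S2.Nonempty := by
    obtain ⟨b, hbdef⟩ : ∃ b : ℝ, b = hinfNorm T1 := ⟨_, rfl⟩
    obtain ⟨a, hadef⟩ : ∃ a : ℝ, a = hinfNorm Y := ⟨_, rfl⟩
    have hb0 : 0 ≤ b := hbdef ▸ hinfNorm_nonneg _
    have ha0 : 0 ≤ a := hadef ▸ hinfNorm_nonneg _
    obtain ⟨γ, hγdef⟩ : ∃ γ : ℝ, γ = a + b + 1 := ⟨_, rfl⟩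
    have hγY : hinfNorm Y < γ := by rw [hγdef, ← hadef]; linarith
    refine ⟨γ, hγY, ?_⟩
    have hYoDet : ∀ z, IsUnit (Yo γ z).det := fun z =>
      (Matrix.isUnit_iff_isUnit_det _).mp (hYoUnit γ hγY z)
    have hspec : ∀ z, specNorm (R γ z - (0 : Matrix (Fin p2) (Fin p1) ℂ)) ≤ b / (b + 1) := by
      intro z
      apply specNorm_le_bound _ (div_nonneg hb0 (by linarith))
      intro w
      rw [sub_zero, hRz γ z, toEuclideanLin_mul_apply, toEuclideanLin_mul_apply]
      set v := Matrix.toEuclideanLin (Yo γ z)⁻¹ w with hvdef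
      have hw : Matrix.toEuclideanLin (Yo γ z) v = w := by
        rw [hvdef, ← toEuclideanLin_mul_apply, Matrix.mul_nonsing_inv _ (hYoDet z),
          toEuclideanLin_one_apply]
      have n1 := norm_ct_apply_le (hUiInner z) (Matrix.toEuclideanLin (T1 z) v)
      have n2 : ‖Matrix.toEuclideanLin (T1 z) v‖ ≤ b * ‖v‖ := by
        refine le_trans (norm_apply_le _ _)
          (mul_le_mul_of_nonneg_right ?_ (norm_nonneg _))
        rw [hbdef]; exact specNorm_le_hinfNorm hT1 z
      have nY : ‖Matrix.toEuclideanLin (Y z) v‖ ≤ a * ‖v‖ := by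
        refine le_trans (norm_apply_le _ _)
          (mul_le_mul_of_nonneg_right ?_ (norm_nonneg _))
        rw [hadef]; exact specNorm_le_hinfNorm hYcont z
      have e3 := normsq_Yo (hYofact γ hγY z) v
      rw [hw, hγdef] at e3
      have nYsq := pow_le_pow_left₀ (norm_nonneg _) nY 2
      have key : (b + 1) * ‖v‖ ≤ ‖w‖ := by
        apply le_of_sq (norm_nonneg w) _ (mul_nonneg (by linarith) (norm_nonneg _))
        have hprod : 0 ≤ a * (b + 1) * ‖v‖ ^ 2 :=
          mul_nonneg (mul_nonneg ha0 (by linarith)) (sq_nonneg _)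
        nlinarith [e3, nYsq, hprod]
      have hlast : b * ‖v‖ ≤ b / (b + 1) * ‖w‖ := by
        rw [div_mul_eq_mul_div, le_div_iff₀ (by linarith : (0:ℝ) < b + 1)]
        nlinarith [mul_le_mul_of_nonneg_left key hb0]
      exact le_trans n1 (le_trans n2 hlast)
    have hdle : distHInf (R γ) ≤ b / (b + 1) := by
      refine le_trans (csInf_le ⟨0, fun d hd => ?_⟩
        ⟨fun _ => 0, continuous_const, memHInf_zero, rfl⟩) (hinfNorm_le hspec)
      obtain ⟨X', -, -, rfl⟩ := hd
      exact hinfNorm_nonneg _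
    exact lt_of_le_of_lt hdle ((div_lt_one (by positivity)).mpr (by linarith))
  -- conclude
  apply le_antisymm
  · exact le_csInf hS2ne dirA
  · apply le_csInf hLSne
    intro c hc
    apply le_of_forall_pos_le_add
    intro ε hε
    exact csInf_le hS2bdd (dirB c hc ε hε)
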